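/- Let M be a maximal ancestral graph on a finite vertex set O and let Y ∈ O be a vertex with no directed edge out of it (Y is not a parent of any vertex; equivalently, Y is not an ancestor of any other vertex). Let M' be the induced subgraph of M on O \ {Y} (keeping all edges of M between vertices of O \ {Y}). Then for all distinct X, W ∈ O \ {Y} and every Z ⊆ O \ {X, W, Y}: Z m-separates X and W in M if and only if Z m-separates X and W in M'. -/
import Mathlib

section Aux
variable {α β : Type*}

lemma infix_map_exists {f : α → β} {l : List α} {l' : List β} (h : l' <:+: List.map f l) :
    ∃ l'', l'' <:+: l ∧ l' = List.map f l'' := by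
  obtain ⟨s, t, hst⟩ := h
  obtain ⟨l₁, l₂, rfl, h1, h2⟩ := List.map_eq_append_iff.mp hst.symm
  obtain ⟨l₃, l₄, rfl, h3, h4⟩ := List.map_eq_append_iff.mp h1
  exact ⟨l₄, ⟨l₃, l₂, rfl⟩, h4.symm⟩

lemma exists_triple_of_mem {p : List α} {v : α} (hv : v ∈ p)
    (hh : p.head? ≠ some v) (hl : p.getLast? ≠ some v) :
    ∃ a c, [a, v, c] <:+: p := by
  obtain ⟨l1, l2, rfl⟩ := List.append_of_mem hv
  rcases l1.eq_nil_or_concat with rfl | ⟨l1', a, rfl⟩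
  · simp at hh
  · rcases l2 with _ | ⟨c, l2'⟩
    · rw [show l1'.concat a ++ [v] = (l1'.concat a) ++ [v] by simp] at hl
      simp [List.getLast?_concat] at hl
    · exact ⟨a, c, l1', l2', by simp [List.concat_eq_append]⟩

end Aux

/-- A mixed graph on a vertex type `V`: each pair of distinct vertices carries at most
one edge, which is either directed (`dir a b` meaning `a → b`) or bidirected
(`bi a b` meaning `a ↔ b`). -/
structure MixedGraph (V : Type*) where
  /-- directed edge `a → b` -/
  dir : V → V → Prop
  /-- bidirected edge `a ↔ b` -/
  bi : V → V → Prop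
  bi_symm : ∀ a b, bi a b → bi b a
  dir_irrefl : ∀ a, ¬ dir a a
  bi_irrefl : ∀ a, ¬ bi a a
  not_dir_and_bi : ∀ a b, dir a b → ¬ bi a b
  not_dir_both : ∀ a b, dir a b → ¬ dir b a

namespace MixedGraph

variable {V : Type*} (G : MixedGraph V)

/-- `a` and `b` are adjacent: some edge joins them. -/
def Adj (a b : V) : Prop := G.dir a b ∨ G.dir b a ∨ G.bi a b

/-- There is an edge between `a` and `b` with an arrowhead at `b`
(i.e. `a → b` or `a ↔ b`). -/
def HeadAt (a b : V) : Prop := G.dir a b ∨ G.bi a b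

/-- `a` is an ancestor of `b` (equivalently `b` is a descendant of `a`):
`a = b` or there is a directed path from `a` to `b`. -/
def Anc : V → V → Prop := Relation.ReflTransGen G.dir

/-- A non-endpoint vertex `b` lying between `a` and `c` on a path is a collider if
both incident edges have an arrowhead at `b`. -/
def ColliderAt (a b c : V) : Prop := G.HeadAt a b ∧ G.HeadAt c b

/-- `p` is a path (a list of pairwise distinct, consecutively adjacent vertices)
from `x` to `y`. -/
def IsPath (p : List V) (x y : V) : Prop :=
  p.Nodup ∧ p.head? = some x ∧ p.getLast? = some y ∧ p.Chain' G.Adj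

/-- The path `p` from `x` to `y` is m-connecting relative to `Z`: every
non-collider on `p` is not in `Z` and every collider on `p` has a descendant in `Z`. -/
def MConnecting (Z : Set V) (p : List V) (x y : V) : Prop :=
  G.IsPath p x y ∧
    ∀ a b c : V, [a, b, c] <:+: p →
      (G.ColliderAt a b c → ∃ z ∈ Z, G.Anc b z) ∧
      (¬ G.ColliderAt a b c → b ∉ Z)

/-- `Z` m-separates `x` and `y` (with `x, y ∉ Z`): no path between `x` and `y` is
m-connecting relative to `Z`. -/
def MSep (x y : V) (Z : Set V) : Prop :=
  x ∉ Z ∧ y ∉ Z ∧ ∀ p : List V, ¬ G.MConnecting Z p x y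

/-- An inducing path between `x` and `y`: every non-endpoint vertex is a collider on
the path and is an ancestor of `x` or of `y`. -/
def IsInducingPath (p : List V) (x y : V) : Prop :=
  G.IsPath p x y ∧
    ∀ a b c : V, [a, b, c] <:+: p → G.ColliderAt a b c ∧ (G.Anc b x ∨ G.Anc b y)

/-- A collider path between `x` and `y`: a path with at least one non-endpoint
vertex, all of whose non-endpoint vertices are colliders. -/
def IsColliderPath (p : List V) (x y : V) : Prop :=
  G.IsPath p x y ∧ 3 ≤ p.length ∧ ∀ a b c : V, [a, b, c] <:+: p → G.ColliderAt a b c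

/-- `G` is ancestral: no directed cycle and no almost directed cycle. -/
def Ancestral : Prop :=
  (∀ a b, G.dir a b → ¬ G.Anc b a) ∧ (∀ a b, G.bi a b → ¬ G.Anc a b)

/-- `G` is a maximal ancestral graph: ancestral, and any two non-adjacent vertices
have no inducing path between them. -/
def IsMAG : Prop :=
  G.Ancestral ∧ ∀ x y : V, x ≠ y → ¬ G.Adj x y → ∀ p : List V, ¬ G.IsInducingPath p x y

/-- The MAG Markov blanket of `T`: all `X ≠ T` such that `T` and `X` are not
m-separated by `O \ {T, X}`. -/
def MMB (T : V) : Set V :=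
  {X | X ≠ T ∧ ¬ G.MSep T X (Set.univ \ {T, X})}

/-- `MMB⁺(T) = MMB(T) ∪ {T}`. -/
def MMBplus (T : V) : Set V := G.MMB T ∪ {T}

/-- The induced subgraph of `G` on a set `s` of vertices, keeping all edges of `G`
between vertices of `s`. -/
def induce (s : Set V) : MixedGraph s where
  dir a b := G.dir a b
  bi a b := G.bi a b
  bi_symm a b h := G.bi_symm a b h
  dir_irrefl a := G.dir_irrefl a
  bi_irrefl a := G.bi_irrefl a
  not_dir_and_bi a b h := G.not_dir_and_bi a b h
  not_dir_both a b h := G.not_dir_both a b h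

end MixedGraph


namespace MixedGraph
variable {V : Type*} (G : MixedGraph V)

lemma anc_eq_of_leaf {Y : V} (hY : ∀ w, ¬ G.dir Y w) {z : V} (h : G.Anc Y z) : z = Y := by
  rcases h.cases_head with h | ⟨c, hc, _⟩
  · exact h.symm
  · exact absurd hc (hY c)

lemma anc_down {s : Set V} {a b : s} (h : (G.induce s).Anc a b) : G.Anc a.val b.val := by
  induction h with
  | refl => exact .refl
  | tail _ hstep ih => exact ih.tail hstep

lemma anc_up {Y : V} (hY : ∀ w, ¬ G.dir Y w) {b z : V} (h : G.Anc b z) (hz : z ≠ Y) :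
    ∀ (hb : b ≠ Y), (G.induce {v | v ≠ Y}).Anc ⟨b, hb⟩ ⟨z, hz⟩ := by
  induction h using Relation.ReflTransGen.head_induction_on with
  | refl => intro hb; exact Relation.ReflTransGen.refl
  | @head b c hstep htail ih =>
    intro hb
    have hc : c ≠ Y := by
      rintro rfl
      exact hz (G.anc_eq_of_leaf hY htail)
    exact Relation.ReflTransGen.head (show (G.induce {v | v ≠ Y}).dir ⟨b, hb⟩ ⟨c, hc⟩ from hstep)
      (ih hc)

end MixedGraph

/-- removing a leaf vertex `Y` (no directed edge out of it) from a MAG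
preserves m-separation among the remaining vertices, for any conditioning set avoiding
`x`, `w` and `Y`. -/
theorem msep_induce_of_leaf {V : Type*} [Fintype V]
    (G : MixedGraph V) (hG : G.IsMAG) (Y : V) (hY : ∀ w : V, ¬ G.dir Y w)
    (x w : V) (hx : x ≠ Y) (hw : w ≠ Y) (hxw : x ≠ w)
    (Z : Set V) (hZ : Z ⊆ Set.univ \ {x, w, Y}) :
    G.MSep x w Z ↔
      (G.induce {v : V | v ≠ Y}).MSep ⟨x, hx⟩ ⟨w, hw⟩ {v : {v : V | v ≠ Y} | (v : V) ∈ Z} := by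
  have hxZ : x ∉ Z := fun h => (hZ h).2 (Or.inl rfl)
  have hwZ : w ∉ Z := fun h => (hZ h).2 (Or.inr (Or.inl rfl))
  have hYZ : Y ∉ Z := fun h => (hZ h).2 (Or.inr (Or.inr rfl))
  set s : Set V := {v : V | v ≠ Y} with hs
  set G' := G.induce s with hG'
  constructor
  · -- MSep in G → MSep in G'
    rintro ⟨-, -, hp⟩
    refine ⟨hxZ, hwZ, fun q hq => ?_⟩
    obtain ⟨⟨hnd, hhead, hlast, hchain⟩, htrip⟩ := hq
    apply hp (q.map Subtype.val)
    refine ⟨⟨?_, ?_, ?_, ?_⟩, ?_⟩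
    · exact (List.nodup_map_iff Subtype.val_injective).mpr hnd
    · rw [List.head?_map, hhead]; rfl
    · rw [List.getLast?_map, hlast]; rfl
    · exact (List.isChain_map _).mpr hchain
    · intro a b c habc
      obtain ⟨l, hl, hmap⟩ := infix_map_exists habc
      match l, hmap with
      | [a', b', c'], hmap =>
        obtain ⟨rfl, rfl, rfl, -⟩ : Subtype.val a' = a ∧ Subtype.val b' = b ∧
            Subtype.val c' = c ∧ True := by
          simpa using hmap.symm
        obtain ⟨hcol, hncol⟩ := htrip a' b' c' hl
        constructor
        · intro hc
          obtain ⟨z, hz, hanc⟩ := hcol hc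
          exact ⟨z.val, hz, G.anc_down hanc⟩
        · intro hc
          exact hncol hc
  · -- MSep in G' → MSep in G
    rintro ⟨-, -, hq⟩
    refine ⟨hxZ, hwZ, fun p hp => ?_⟩
    obtain ⟨⟨hnd, hhead, hlast, hchain⟩, htrip⟩ := hp
    -- Y is not on p
    have hYnp : Y ∉ p := by
      intro hv
      have hh : p.head? ≠ some Y := by rw [hhead]; simpa using hx
      have hl : p.getLast? ≠ some Y := by rw [hlast]; simpa using hw
      obtain ⟨a, c, habc⟩ := exists_triple_of_mem hv hh hl
      have hch : List.Chain' G.Adj [a, Y, c] := hchain.infix habc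
      have h1 : G.Adj a Y := (List.isChain_cons_cons.mp hch).1
      have h2 : G.Adj Y c := (List.isChain_cons_cons.mp ((List.isChain_cons_cons.mp hch).2)).1
      have hcol : G.ColliderAt a Y c := by
        constructor
        · rcases h1 with h | h | h
          · exact Or.inl h
          · exact absurd h (hY a)
          · exact Or.inr h
        · rcases h2 with h | h | h
          · exact absurd h (hY c)
          · exact Or.inl h
          · exact Or.inr (G.bi_symm _ _ h)
      obtain ⟨z, hz, hanc⟩ := (htrip a Y c habc).1 hcol
      rw [G.anc_eq_of_leaf hY hanc] at hz
      exact hYZ hz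
    have hYp : ∀ v ∈ p, v ≠ Y := fun v hv hveq => hYnp (hveq ▸ hv)
    -- lift p to a list over s
    set q : List s := p.attach.map (fun v => (⟨v.1, hYp v.1 v.2⟩ : s)) with hqdef
    have hqp : q.map Subtype.val = p := by
      simp [hqdef, Function.comp]
    apply hq q
    refine ⟨⟨?_, ?_, ?_, ?_⟩, ?_⟩
    · exact List.Nodup.of_map Subtype.val (by rw [hqp]; exact hnd)
    · apply Option.map_injective Subtype.val_injective
      rw [← List.head?_map, hqp, hhead]
      rfl
    · apply Option.map_injective Subtype.val_injective
      rw [← List.getLast?_map, hqp, hlast]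
      rfl
    · have h1 : List.Chain' G.Adj (q.map Subtype.val) := by rw [hqp]; exact hchain
      have h2 : List.Chain' (fun a b : s => G.Adj a.val b.val) q := (List.isChain_map _).mp h1
      exact h2
    · intro a b c habc
      have habc' : [a.val, b.val, c.val] <:+: p := by
        rw [← hqp]
        simpa using habc.map Subtype.val
      obtain ⟨hcol, hncol⟩ := htrip a.val b.val c.val habc'
      constructor
      · intro hc
        obtain ⟨z, hz, hanc⟩ := hcol hc
        have hzY : z ≠ Y := fun h => hYZ (h ▸ hz)
        exact ⟨⟨z, hzY⟩, hz, G.anc_up hY hanc hzY b.2⟩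
      · intro hc
        exact hncol hc
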